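/- Under the assumption α_{ij} ≥ 0 for all i,j, in the directed graph D on vertices {v_1,...,v_K,u} with lengths l(v_i,v_j)=α_{ii}−d_i−α_{ij}, l(v_i,u)=α_{ii}−d_i, l(u,v_i)=0, if every cycle of the form (u,v_i,u) has nonnegative length and every cycle using only vertices among {v_1,...,v_K} has nonnegative length, then every directed cycle of D has nonnegative length (i.e., cycles of the form (u, v_{i_1}, ..., v_{i_m}, u) with m > 1 impose no additional constraints). -/

import Mathlib

/-- Cyclic successor in `Fin m`. -/
def cnext {m : ℕ} (j : Fin m) : Fin m := ⟨(j.1 + 1) % m, Nat.mod_lt _ j.pos⟩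

/-- Arc lengths of the directed graph `D` on vertices `{v_1,...,v_K, u}`,
where `some i` represents `v_i` and `none` represents the ground node `u`. -/
def arcLen {K : ℕ} (α : Fin K → Fin K → ℝ) (d : Fin K → ℝ) :
    Option (Fin K) → Option (Fin K) → ℝ
  | some i, some j => α i i - d i - α i j
  | some i, none => α i i - d i
  | none, _ => 0

lemma cnext_eq_add_one {m : ℕ} [NeZero m] (j : Fin m) : cnext j = j + 1 := by
  apply Fin.ext
  simp [cnext, Fin.add_def, Fin.val_one']

theorem stmt_3 (K : ℕ) (hK : 1 ≤ K) (α : Fin K → Fin K → ℝ)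
    (hα : ∀ i j, 0 ≤ α i j) (d : Fin K → ℝ)
    -- every cycle of the form (u, v_i, u) has nonnegative length:
    (h1 : ∀ i : Fin K, 0 ≤ arcLen α d (some i) none + arcLen α d none (some i))
    -- every cycle using only vertices among {v_1,...,v_K} has nonnegative length:
    (h2 : ∀ m : ℕ, 2 ≤ m → ∀ i : Fin m → Fin K, Function.Injective i →
      0 ≤ ∑ j : Fin m, arcLen α d (some (i j)) (some (i (cnext j)))) :
    -- every directed cycle of D has nonnegative length:
    ∀ m : ℕ, 2 ≤ m → ∀ i : Fin m → Option (Fin K), Function.Injective i →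
      0 ≤ ∑ j : Fin m, arcLen α d (i j) (i (cnext j)) := by
  intro m hm i hi
  haveI : NeZero m := ⟨by omega⟩
  by_cases hnone : ∃ j0, i j0 = none
  · obtain ⟨j0, hj0⟩ := hnone
    -- rotate so that `none` is at position 0
    set i' : Fin m → Option (Fin K) := fun j => i (j + j0) with hi'
    have hrot : ∑ j : Fin m, arcLen α d (i j) (i (cnext j))
        = ∑ j : Fin m, arcLen α d (i' j) (i' (cnext j)) := by
      refine (Fintype.sum_equiv (Equiv.addRight j0) _ _ fun j => ?_).symm
      simp only [hi', Equiv.coe_addRight, cnext_eq_add_one]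
      rw [add_right_comm j 1 j0]
    rw [hrot]
    have hi'inj : Function.Injective i' := hi.comp (Equiv.addRight j0).injective
    have hi'0 : i' 0 = none := by simp [hi', hj0]
    clear hrot hj0 hi hi'
    -- now work with i'
    obtain ⟨n, rfl⟩ : ∃ n, m = n + 1 := ⟨m - 1, by omega⟩
    have hsome : ∀ t : Fin n, (i' t.succ).isSome := by
      intro t
      rw [Option.isSome_iff_ne_none]
      intro h
      exact (Fin.succ_ne_zero t) (hi'inj (h.trans hi'0.symm))
    set g : Fin n → Fin K := fun t => (i' t.succ).get (hsome t) with hg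
    have hgsome : ∀ t : Fin n, i' t.succ = some (g t) := fun t => (Option.some_get (hsome t)).symm
    have hginj : Function.Injective g := by
      intro a b hab
      have : i' a.succ = i' b.succ := by rw [hgsome a, hgsome b, hab]
      exact Fin.succ_injective _ (hi'inj this)
    rw [Fin.sum_univ_succ]
    have hfirst : arcLen α d (i' 0) (i' (cnext 0)) = 0 := by rw [hi'0]; rfl
    rw [hfirst, zero_add]
    rcases Nat.lt_or_ge n 2 with hn | hn
    · -- n = 1, m = 2: the cycle is (u, v_i, u)
      interval_cases n
      · omega
      · rw [Fin.sum_univ_one]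
        have h0 : cnext ((0 : Fin 1).succ) = 0 := rfl
        rw [h0, hi'0, hgsome 0]
        have := h1 (g 0)
        simpa [arcLen] using this
    · -- n ≥ 2: compare with the cycle (v_{i_1}, ..., v_{i_n}) and use h2
      have key : ∀ t : Fin n,
          arcLen α d (some (g t)) (some (g (cnext t))) ≤ arcLen α d (i' t.succ) (i' (cnext t.succ)) := by
        intro t
        rcases Nat.lt_or_ge (t.1 + 1) n with ht | ht
        · have h1' : cnext (t.succ) = (cnext t).succ := by
            apply Fin.ext
            simp [cnext, Fin.val_succ, Nat.mod_eq_of_lt (by omega : t.1 + 1 + 1 < n + 1),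
              Nat.mod_eq_of_lt ht]
          rw [h1', hgsome t, hgsome (cnext t)]
        · have htn : t.1 + 1 = n := by omega
          have h1' : cnext (t.succ) = 0 := by
            apply Fin.ext
            simp [cnext, Fin.val_succ, htn]
          have h2' : cnext t = ⟨0, by omega⟩ := by
            apply Fin.ext
            simp [cnext, htn]
          rw [h1', hi'0, hgsome t, h2']
          simp only [arcLen]
          have := hα (g t) (g ⟨0, by omega⟩)
          linarith
      calc (0:ℝ) ≤ ∑ t : Fin n, arcLen α d (some (g t)) (some (g (cnext t))) := h2 n hn g hginj
        _ ≤ ∑ t : Fin n, arcLen α d (i' t.succ) (i' (cnext t.succ)) := Finset.sum_le_sum fun t _ => key t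
  · -- no `none` in the cycle: directly h2
    push_neg at hnone
    have hsome : ∀ j, (i j).isSome := fun j => Option.isSome_iff_ne_none.mpr (hnone j)
    set f : Fin m → Fin K := fun j => (i j).get (hsome j) with hf
    have hfs : ∀ j, i j = some (f j) := fun j => (Option.some_get (hsome j)).symm
    have hfinj : Function.Injective f := by
      intro a b hab
      apply hi
      rw [hfs a, hfs b, hab]
    have : ∑ j : Fin m, arcLen α d (i j) (i (cnext j))
        = ∑ j : Fin m, arcLen α d (some (f j)) (some (f (cnext j))) := by
      exact Finset.sum_congr rfl fun j _ => by rw [hfs j, hfs (cnext j)]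
    rw [this]
    exact h2 m hm f hfinj
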